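/- For every n ≥ 1, 0 < 1 − α(n+1) < (γ(n)/4)·(1 − α(n)). -/

import Mathlib

/-- One step of the recursion for the ice-model boundary counts
`(pa, pb, pc, pd)` on the Sierpinski gasket `SG(n)`. -/
def iceStep : ℕ × ℕ × ℕ × ℕ → ℕ × ℕ × ℕ × ℕ
  | (a, b, c, d) =>
    ((a + b) ^ 2 * (a + 3 * c + d),
     (a + b) ^ 2 * (b + 3 * c + d),
     a ^ 2 * b + b ^ 2 * a + (3 * c + d) ^ 3,
     a ^ 3 + b ^ 3 + (3 * c + d) ^ 3)

/-- The quadruple `(pa(n), pb(n), pc(n), pd(n))`. -/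
def iceSeq : ℕ → ℕ × ℕ × ℕ × ℕ
  | 0 => (0, 1, 0, 1)
  | n + 1 => iceStep (iceSeq n)

def pa (n : ℕ) : ℕ := (iceSeq n).1
def pb (n : ℕ) : ℕ := (iceSeq n).2.1
def pc (n : ℕ) : ℕ := (iceSeq n).2.2.1
def pd (n : ℕ) : ℕ := (iceSeq n).2.2.2

noncomputable def alphaSeq (n : ℕ) : ℝ := (pa n : ℝ) / (pb n : ℝ)
noncomputable def betaSeq (n : ℕ) : ℝ := (pd n : ℝ) / (pc n : ℝ)
noncomputable def gammaSeq (n : ℕ) : ℝ := (pb n : ℝ) / (pc n : ℝ)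

lemma pa_succ (n : ℕ) : pa (n+1) = (pa n + pb n) ^ 2 * (pa n + 3 * pc n + pd n) := rfl
lemma pb_succ (n : ℕ) : pb (n+1) = (pa n + pb n) ^ 2 * (pb n + 3 * pc n + pd n) := rfl
lemma pc_succ (n : ℕ) :
    pc (n+1) = pa n ^ 2 * pb n + pb n ^ 2 * pa n + (3 * pc n + pd n) ^ 3 := rfl
lemma pd_succ (n : ℕ) : pd (n+1) = pa n ^ 3 + pb n ^ 3 + (3 * pc n + pd n) ^ 3 := rfl

lemma ice_inv (n : ℕ) (hn : 1 ≤ n) :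
    1 ≤ pa n ∧ pa n < pb n ∧ 1 ≤ pc n ∧ 1 ≤ pd n ∧ pc n < pb n + pd n := by
  induction n with
  | zero => omega
  | succ n ih =>
    rcases Nat.eq_or_lt_of_le hn with h | h
    · have h0 : n = 0 := by omega
      subst h0
      refine ⟨?_, ?_, ?_, ?_, ?_⟩ <;> decide
    · have hn' : 1 ≤ n := by omega
      obtain ⟨h1, h2, h3, h4, h5⟩ := ih hn'
      rw [pa_succ, pb_succ, pc_succ, pd_succ]
      refine ⟨?_, ?_, ?_, ?_, ?_⟩
      · nlinarith
      · have hp : 0 < (pa n + pb n) ^ 2 := by positivity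
        have hlt : pa n + 3 * pc n + pd n < pb n + 3 * pc n + pd n := by omega
        exact (mul_lt_mul_iff_right₀ hp).mpr hlt
      · have : 1 ≤ (3 * pc n + pd n) ^ 3 := Nat.one_le_pow _ _ (by omega)
        omega
      · have : 1 ≤ (3 * pc n + pd n) ^ 3 := Nat.one_le_pow _ _ (by omega)
        omega
      · -- pc' < pb' + pd'
        have hb1 : 1 ≤ pb n := by omega
        nlinarith [sq_nonneg (pa n + pb n), h2, h4,
          Nat.one_le_iff_ne_zero.mpr (by positivity : (pa n + pb n) ^ 2 ≠ 0)]

theorem stmt_2 (n : ℕ) (hn : 1 ≤ n) :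
    0 < 1 - alphaSeq (n + 1) ∧
    1 - alphaSeq (n + 1) < gammaSeq n / 4 * (1 - alphaSeq n) := by
  obtain ⟨h1, h2, h3, h4, h5⟩ := ice_inv n hn
  set A := (pa n : ℝ) with hA
  set B := (pb n : ℝ) with hB
  set C := (pc n : ℝ) with hC
  set D := (pd n : ℝ) with hD
  have hApos : (0:ℝ) < A := by rw [hA]; exact_mod_cast Nat.lt_of_lt_of_le Nat.zero_lt_one h1
  have hAB : A < B := by rw [hA, hB]; exact_mod_cast h2
  have hCpos : (0:ℝ) < C := by rw [hC]; exact_mod_cast Nat.lt_of_lt_of_le Nat.zero_lt_one h3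
  have hDpos : (0:ℝ) < D := by rw [hD]; exact_mod_cast Nat.lt_of_lt_of_le Nat.zero_lt_one h4
  have hCBD : C < B + D := by rw [hC, hB, hD]; exact_mod_cast h5
  have hBpos : (0:ℝ) < B := lt_trans hApos hAB
  have ha' : (pa (n+1) : ℝ) = (A + B) ^ 2 * (A + 3 * C + D) := by
    rw [pa_succ]; push_cast; ring
  have hb' : (pb (n+1) : ℝ) = (A + B) ^ 2 * (B + 3 * C + D) := by
    rw [pb_succ]; push_cast; ring
  have hYpos : (0:ℝ) < (A + B) ^ 2 * (B + 3 * C + D) := by positivity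
  have hden : (0:ℝ) < B + 3 * C + D := by linarith
  have key : 1 - alphaSeq (n+1) = (B - A) / (B + 3 * C + D) := by
    rw [alphaSeq, ha', hb']
    field_simp
    ring
  have key2 : gammaSeq n / 4 * (1 - alphaSeq n) = (B - A) / (4 * C) := by
    rw [gammaSeq, alphaSeq, ← hA, ← hB, ← hC]
    field_simp
  constructor
  · rw [key]
    exact div_pos (by linarith) hden
  · rw [key, key2]
    apply div_lt_div_of_pos_left (by linarith) (by positivity) (by linarith)
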